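/- Let A = {i₁ < i₂ < ⋯ < i_n} be a finite nonempty set of positive integers, and for c ∈ ℝ let C_A(c) be the A × A real matrix with diagonal entries C_{ii} = 60c and off-diagonal entries C_{ij} = −80π²·i·j (i ≠ j, i, j ∈ A). Then the set S_A = {c ∈ ℝ : det C_A(c) = 0} has exactly n elements. If n = 1 then S_A = {0}. If n ≥ 2 then, writing S_A = {c^n < ⋯ < c² < 0 < c¹}, one has −(4/3)π² i_ν² < c^ν < −(4/3)π² i_{ν−1}² for every 2 ≤ ν ≤ n; in particular 0 ∉ S_A. -/

import Mathlib

open Polynomial Finset in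
lemma detFormula {m : ℕ} (β : ℝ) (j dd : Fin m → ℝ) (hd : ∀ a, dd a ≠ 0) :
    (Matrix.of fun a b : Fin m => (if a = b then dd a else 0) - β * j a * j b).det
    = ∏ a, dd a - β * ∑ a, j a ^ 2 * ∏ b ∈ Finset.univ.erase a, dd b := by
  have hM : (Matrix.of fun a b : Fin m => (if a = b then dd a else 0) - β * j a * j b)
      = Matrix.diagonal dd *
        (1 + Matrix.replicateCol Unit (fun a => -β * j a / dd a) * Matrix.replicateRow Unit j) := by
    ext a b
    rw [Matrix.diagonal_mul]
    simp only [Matrix.add_apply, Matrix.one_apply, Matrix.mul_apply, Matrix.replicateCol_apply,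
      Matrix.replicateRow_apply, Matrix.of_apply, Finset.univ_unique, Finset.sum_singleton]
    by_cases h : a = b
    · subst h
      rw [if_pos rfl, if_pos rfl]
      field_simp [hd a]
      ring
    · rw [if_neg h, if_neg h]
      field_simp [hd a]
      ring
  rw [hM, Matrix.det_mul, Matrix.det_diagonal, Matrix.det_one_add_replicateCol_mul_replicateRow]
  have h1 : dotProduct j (fun a => -β * j a / dd a) = ∑ a, -β * j a ^ 2 / dd a := by
    simp only [dotProduct]
    congr 1; funext a; ring
  rw [h1, mul_add, mul_one, Finset.mul_sum, Finset.mul_sum]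
  congr 1
  rw [← Finset.sum_neg_distrib]
  apply Finset.sum_congr rfl
  intro a _
  rw [← Finset.mul_prod_erase _ _ (Finset.mem_univ a)]
  field_simp [hd a]

open Polynomial Finset in
noncomputable def GP (n : ℕ) (j : Fin n → ℝ) : ℝ[X] :=
  ∏ a : Fin n, (C 60 * X + C (80 * Real.pi ^ 2 * j a ^ 2)) -
    C (80 * Real.pi ^ 2) * ∑ a : Fin n, C (j a ^ 2) *
      ∏ b ∈ Finset.univ.erase a, (C 60 * X + C (80 * Real.pi ^ 2 * j b ^ 2))

open Polynomial Finset in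
lemma evalGP (n : ℕ) (j : Fin n → ℝ) (c : ℝ) :
    (GP n j).eval c = ∏ a, (60 * c + 80 * Real.pi ^ 2 * j a ^ 2) -
      80 * Real.pi ^ 2 * ∑ a, j a ^ 2 *
        ∏ b ∈ Finset.univ.erase a, (60 * c + 80 * Real.pi ^ 2 * j b ^ 2) := by
  simp [GP, eval_prod, eval_finset_sum]

open Polynomial Finset in
lemma detGP (n : ℕ) (j : Fin n → ℝ) (c : ℝ) :
    (Matrix.of fun a b : Fin n =>
        if a = b then 60 * c else -80 * Real.pi ^ 2 * j a * j b).det = (GP n j).eval c := by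
  set β := 80 * Real.pi ^ 2 with hβ
  have hβpos : 0 < β := by positivity
  set MP : Matrix (Fin n) (Fin n) ℝ[X] :=
    Matrix.of (fun a b : Fin n => if a = b then C 60 * X else C (-β * j a * j b)) with hMP
  have hmap : ∀ x : ℝ, MP.map (evalRingHom x) = Matrix.of (fun a b : Fin n =>
      if a = b then 60 * x else -β * j a * j b) := by
    intro x
    ext a b
    by_cases h : a = b <;> simp [hMP, Matrix.map_apply, h]
  have hdet : ∀ x : ℝ, (Matrix.of (fun a b : Fin n =>
      if a = b then 60 * x else -β * j a * j b)).det = MP.det.eval x := by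
    intro x
    rw [← hmap x]
    exact (RingHom.map_det (evalRingHom x) MP).symm
  have hkey : MP.det = GP n j := by
    apply Polynomial.eq_of_infinite_eval_eq
    have hfin : (⋃ a : Fin n, {-(β * j a ^ 2) / 60} : Set ℝ).Finite :=
      Set.finite_iUnion fun a => Set.finite_singleton _
    apply Set.Infinite.mono ?_ hfin.infinite_compl
    intro x hx
    simp only [Set.mem_compl_iff, Set.mem_iUnion, Set.mem_singleton_iff, not_exists] at hx
    have hdd : ∀ a : Fin n, 60 * x + β * j a ^ 2 ≠ 0 := by
      intro a h
      exact hx a (by linarith)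
    have hmat : (Matrix.of (fun a b : Fin n =>
        if a = b then 60 * x else -β * j a * j b)) =
        Matrix.of (fun a b : Fin n =>
          (if a = b then (60 * x + β * j a ^ 2) else 0) - β * j a * j b) := by
      ext a b
      by_cases h : a = b
      · subst h; simp; ring
      · simp [h]
    have := detFormula β j (fun a => 60 * x + β * j a ^ 2) hdd
    simp only [Set.mem_setOf_eq]
    rw [← hdet x, hmat, this, evalGP]
  have hE : (Matrix.of fun a b : Fin n =>
      if a = b then 60 * c else -80 * Real.pi ^ 2 * j a * j b) =
      (Matrix.of fun a b : Fin n => if a = b then 60 * c else -β * j a * j b) := by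
    ext a b
    by_cases h : a = b <;> simp only [Matrix.of_apply, h, hβ, eq_self_iff_true, if_true, if_false, ite_true, ite_false] <;> ring
  rw [hE, hdet c, hkey]

open Polynomial Finset in
lemma GP_degree (n : ℕ) (hn : 1 ≤ n) (j : Fin n → ℝ) :
    (GP n j).degree = n ∧ (GP n j).leadingCoeff = 60 ^ n := by
  set P1 : ℝ[X] := ∏ a : Fin n, (C 60 * X + C (80 * Real.pi ^ 2 * j a ^ 2)) with hP1
  set P2 : ℝ[X] := C (80 * Real.pi ^ 2) * ∑ a : Fin n, C (j a ^ 2) *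
      ∏ b ∈ Finset.univ.erase a, (C 60 * X + C (80 * Real.pi ^ 2 * j b ^ 2)) with hP2
  have h60 : (60 : ℝ) ≠ 0 := by norm_num
  have hf0 : ∀ a : Fin n, (C (60:ℝ) * X + C (80 * Real.pi ^ 2 * j a ^ 2)) ≠ 0 := by
    intro a h
    have := natDegree_linear (b := 80 * Real.pi ^ 2 * j a ^ 2) h60
    rw [h] at this
    simp at this
  have hP1deg : P1.natDegree = n := by
    have h1 : ∀ a : Fin n, (C (60:ℝ) * X + C (80 * Real.pi ^ 2 * j a ^ 2)).natDegree = 1 :=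
      fun a => natDegree_linear h60
    rw [hP1, natDegree_prod _ _ (fun a _ => hf0 a)]
    simp only [h1, Finset.sum_const, Finset.card_univ, Fintype.card_fin, smul_eq_mul, mul_one]
  have hP1ne : P1 ≠ 0 := prod_ne_zero_iff.mpr (fun a _ => hf0 a)
  have hP1lead : P1.leadingCoeff = 60 ^ n := by
    have h1 : ∀ a : Fin n, (C (60:ℝ) * X + C (80 * Real.pi ^ 2 * j a ^ 2)).leadingCoeff = 60 :=
      fun a => leadingCoeff_linear h60
    rw [hP1, leadingCoeff_prod]
    simp only [h1, Finset.prod_const, Finset.card_univ, Fintype.card_fin]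
  have hP2deg : P2.natDegree ≤ n - 1 := by
    refine (natDegree_C_mul_le _ _).trans ?_
    refine natDegree_sum_le_of_forall_le _ _ (fun a _ => ?_)
    refine (natDegree_C_mul_le _ _).trans ?_
    refine (natDegree_prod_le _ _).trans ?_
    calc ∑ b ∈ Finset.univ.erase a, (C (60:ℝ) * X + C (80 * Real.pi ^ 2 * j b ^ 2)).natDegree
        ≤ ∑ b ∈ Finset.univ.erase a, 1 := by
          exact Finset.sum_le_sum (fun b _ => natDegree_linear_le)
      _ = n - 1 := by simp [Finset.card_erase_of_mem]
  have hdlt : P2.degree < P1.degree := by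
    have h2 : P2.degree ≤ (n - 1 : ℕ) := degree_le_natDegree.trans (by exact_mod_cast hP2deg)
    have h1 : P1.degree = (n : ℕ) := by
      rw [degree_eq_natDegree hP1ne, hP1deg]
    rw [h1]
    refine h2.trans_lt ?_
    exact_mod_cast Nat.sub_lt hn one_pos
  have hdeg : (GP n j).degree = n := by
    have : GP n j = P1 - P2 := rfl
    rw [this, degree_sub_eq_left_of_degree_lt hdlt, degree_eq_natDegree hP1ne, hP1deg]
  refine ⟨hdeg, ?_⟩
  have : GP n j = P1 - P2 := rfl
  rw [this, leadingCoeff_sub_of_degree_lt hdlt, hP1lead]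

open Polynomial Finset in
lemma GP_eval_zero (n : ℕ) (j : Fin n → ℝ) :
    (GP n j).eval 0 = (1 - (n : ℝ)) * ∏ a, (80 * Real.pi ^ 2 * j a ^ 2) := by
  rw [evalGP]
  have h1 : ∀ a : Fin n, (60 * (0:ℝ) + 80 * Real.pi ^ 2 * j a ^ 2)
      = 80 * Real.pi ^ 2 * j a ^ 2 := fun a => by ring
  simp only [h1]
  rw [Finset.mul_sum]
  have h2 : ∀ a : Fin n, 80 * Real.pi ^ 2 * (j a ^ 2 *
      ∏ b ∈ Finset.univ.erase a, (80 * Real.pi ^ 2 * j b ^ 2))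
      = ∏ b, (80 * Real.pi ^ 2 * j b ^ 2) := by
    intro a
    rw [← Finset.mul_prod_erase Finset.univ (fun b => 80 * Real.pi ^ 2 * j b ^ 2) (mem_univ a)]
    ring
  rw [Finset.sum_congr rfl (fun a _ => h2 a)]
  simp [Finset.card_univ]
  ring

open Polynomial Finset in
lemma GP_sign (n : ℕ) (j : Fin n → ℝ) (hjpos : ∀ a, 0 < j a) (hjmono : StrictMono j)
    (a₀ : Fin n) :
    (-1 : ℝ) ^ (a₀ : ℕ) * (GP n j).eval (-(80 * Real.pi ^ 2 * j a₀ ^ 2) / 60) < 0 := by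
  set β : ℝ := 80 * Real.pi ^ 2 with hβ
  have hβpos : 0 < β := by positivity
  set c₀ : ℝ := -(β * j a₀ ^ 2) / 60 with hc₀
  have hdd : ∀ b : Fin n, 60 * c₀ + β * j b ^ 2 = β * (j b ^ 2 - j a₀ ^ 2) := by
    intro b; rw [hc₀]; ring
  rw [evalGP]
  simp only [← hβ, hdd]
  have hprod0 : ∏ a, β * (j a ^ 2 - j a₀ ^ 2) = 0 :=
    Finset.prod_eq_zero (mem_univ a₀) (by ring)
  have hsum : ∑ a, j a ^ 2 * ∏ b ∈ Finset.univ.erase a, β * (j b ^ 2 - j a₀ ^ 2)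
      = j a₀ ^ 2 * ∏ b ∈ Finset.univ.erase a₀, β * (j b ^ 2 - j a₀ ^ 2) := by
    refine Finset.sum_eq_single_of_mem a₀ (mem_univ _) (fun a _ ha => ?_)
    rw [Finset.prod_eq_zero (Finset.mem_erase.mpr ⟨Ne.symm ha, mem_univ _⟩) (by ring), mul_zero]
  rw [hprod0, hsum, zero_sub]
  have hsplit : Finset.univ.erase a₀ = Finset.Iio a₀ ∪ Finset.Ioi a₀ := by
    ext b
    simp only [Finset.mem_erase, Finset.mem_univ, and_true, Finset.mem_union,
      Finset.mem_Iio, Finset.mem_Ioi]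
    exact ne_iff_lt_or_gt
  have hdisj : Disjoint (Finset.Iio a₀) (Finset.Ioi a₀) := by
    rw [Finset.disjoint_left]
    intro b hb hb'
    simp only [Finset.mem_Iio] at hb
    simp only [Finset.mem_Ioi] at hb'
    exact absurd (hb.trans hb') (lt_irrefl _)
  rw [hsplit, Finset.prod_union hdisj]
  have hIoi : 0 < ∏ b ∈ Finset.Ioi a₀, β * (j b ^ 2 - j a₀ ^ 2) := by
    refine Finset.prod_pos (fun b hb => ?_)
    have hlt : j a₀ < j b := hjmono (Finset.mem_Ioi.mp hb)
    have h0 := hjpos a₀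
    have h2 : 0 < j b ^ 2 - j a₀ ^ 2 := by nlinarith
    exact mul_pos hβpos h2
  have hIio : ∏ b ∈ Finset.Iio a₀, β * (j b ^ 2 - j a₀ ^ 2)
      = (-1 : ℝ) ^ (a₀ : ℕ) * ∏ b ∈ Finset.Iio a₀, β * (j a₀ ^ 2 - j b ^ 2) := by
    rw [← Fin.card_Iio a₀, ← Finset.prod_const, ← Finset.prod_mul_distrib]
    exact Finset.prod_congr rfl (fun b _ => by ring)
  have hIiopos : 0 < ∏ b ∈ Finset.Iio a₀, β * (j a₀ ^ 2 - j b ^ 2) := by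
    refine Finset.prod_pos (fun b hb => ?_)
    have hlt : j b < j a₀ := hjmono (Finset.mem_Iio.mp hb)
    have h0 := hjpos b
    have h2 : 0 < j a₀ ^ 2 - j b ^ 2 := by nlinarith
    exact mul_pos hβpos h2
  rw [hIio]
  have hsq : (-1 : ℝ) ^ (a₀ : ℕ) * (-1 : ℝ) ^ (a₀ : ℕ) = 1 := by
    rw [← pow_add, ← two_mul, pow_mul, neg_one_sq, one_pow]
  have hj0 : 0 < j a₀ := hjpos a₀
  set s : ℝ := (-1 : ℝ) ^ (a₀ : ℕ)
  set P : ℝ := ∏ b ∈ Finset.Iio a₀, β * (j a₀ ^ 2 - j b ^ 2)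
  set Q : ℝ := ∏ b ∈ Finset.Ioi a₀, β * (j b ^ 2 - j a₀ ^ 2)
  have hkey : s * -(β * (j a₀ ^ 2 * (s * P * Q))) = -(β * (j a₀ ^ 2 * (P * Q))) := by
    calc s * -(β * (j a₀ ^ 2 * (s * P * Q)))
        = -(β * (j a₀ ^ 2 * (P * Q))) * (s * s) := by ring
      _ = -(β * (j a₀ ^ 2 * (P * Q))) := by rw [hsq, mul_one]
  rw [hkey]
  have : 0 < β * (j a₀ ^ 2 * (P * Q)) := by positivity
  linarith

/-- Let `A = {i₁ < ⋯ < i_n}` be a finite nonempty set of positive integers, given by its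
increasing enumeration `i 1 < i 2 < ⋯ < i n`, and for `c ∈ ℝ` let `C_A(c)` be the matrix
with diagonal entries `60c` and off-diagonal entries `−80π² i_a i_b`.  Then
`S_A = {c : det C_A(c) = 0}` consists of exactly `n` values, enumerated by a strictly
decreasing function `d` on `{1, …, n}` (so `c^ν = d ν`, `c¹ = d 1` the largest).  If
`n = 1` then `S_A = {0}`; if `n ≥ 2` then `d 1 > 0`, `0 ∉ S_A`, and
`−(4/3)π² i_ν² < c^ν < −(4/3)π² i_{ν−1}²` for all `2 ≤ ν ≤ n`. -/
theorem stmt14 (n : ℕ) (hn : 1 ≤ n) (i : ℕ → ℕ)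
    (hpos : ∀ ν : ℕ, 1 ≤ ν → ν ≤ n → 0 < i ν)
    (hmono : ∀ ν μ : ℕ, 1 ≤ ν → ν < μ → μ ≤ n → i ν < i μ) :
    ∃ d : ℕ → ℝ,
      (∀ ν μ : ℕ, 1 ≤ ν → ν < μ → μ ≤ n → d μ < d ν) ∧
      {c : ℝ | (Matrix.of fun a b : Fin n =>
          if a = b then 60 * c
          else -80 * Real.pi ^ 2 * (i (a.1 + 1) : ℝ) * (i (b.1 + 1) : ℝ)).det = 0}
        = d '' Set.Icc 1 n ∧
      (n = 1 → d 1 = 0) ∧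
      (2 ≤ n →
        0 < d 1 ∧ (0 : ℝ) ∉ d '' Set.Icc 1 n ∧
        ∀ ν : ℕ, 2 ≤ ν → ν ≤ n →
          -(4 / 3) * Real.pi ^ 2 * (i ν : ℝ) ^ 2 < d ν ∧
          d ν < -(4 / 3) * Real.pi ^ 2 * (i (ν - 1) : ℝ) ^ 2) := by
  classical
  set j : Fin n → ℝ := fun a => (i (a.1 + 1) : ℝ) with hj
  have hjpos : ∀ a : Fin n, 0 < j a := by
    intro a
    have := hpos (a.1 + 1) (by omega) (by omega)
    simp only [hj]
    exact_mod_cast this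
  have hjmono : StrictMono j := by
    intro a b hab
    have hab' : a.1 < b.1 := hab
    have := hmono (a.1 + 1) (b.1 + 1) (by omega) (by omega) (by omega)
    simp only [hj]
    exact_mod_cast this
  have hdetG : ∀ c : ℝ, (Matrix.of fun a b : Fin n =>
      if a = b then 60 * c
      else -80 * Real.pi ^ 2 * (i (a.1 + 1) : ℝ) * (i (b.1 + 1) : ℝ)).det
      = (GP n j).eval c := fun c => detGP n j c
  have hpi2 : (0:ℝ) < Real.pi ^ 2 := by positivity
  rcases eq_or_lt_of_le hn with h1 | h2
  · -- n = 1
    subst h1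
    refine ⟨fun _ => 0, ?_, ?_, fun _ => rfl, ?_⟩
    · intro ν μ hν hνμ hμ; omega
    · ext c
      simp only [Set.mem_setOf_eq]
      have hval : (Matrix.of fun a b : Fin 1 =>
          if a = b then 60 * c
          else -80 * Real.pi ^ 2 * (i (a.1 + 1) : ℝ) * (i (b.1 + 1) : ℝ)).det = 60 * c := by
        rw [Matrix.det_fin_one]
        simp
      rw [hval]
      constructor
      · intro h
        exact ⟨1, by simp, by show (0:ℝ) = c; linarith⟩
      · rintro ⟨ν, hν, hd⟩
        rw [← hd]
        simp
    · intro h; omega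
  · -- n ≥ 2
    have hn2 : 2 ≤ n := h2
    obtain ⟨hGdeg, hGlead⟩ := GP_degree n hn j
    have hGne : GP n j ≠ 0 := by
      intro h
      rw [h, Polynomial.degree_zero] at hGdeg
      exact absurd hGdeg.symm (by simp)
    have hGnat : (GP n j).natDegree = n := Polynomial.natDegree_eq_of_degree_eq_some hGdeg
    set A : ℕ → ℝ := fun ν => -(4 / 3) * Real.pi ^ 2 * (i ν : ℝ) ^ 2 with hA
    have hAeq : ∀ ν : ℕ, 1 ≤ ν → (hνn : ν ≤ n) →
        A ν = -(80 * Real.pi ^ 2 * j (⟨ν - 1, by omega⟩ : Fin n) ^ 2) / 60 := by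
      intro ν h1 h2'
      have hv : (⟨ν - 1, by omega⟩ : Fin n).1 + 1 = ν := by simp; omega
      simp only [hA, hj, hv]
      ring
    have hsign : ∀ ν : ℕ, 1 ≤ ν → ν ≤ n →
        (-1 : ℝ) ^ (ν - 1) * (GP n j).eval (A ν) < 0 := by
      intro ν h1 h2'
      rw [hAeq ν h1 h2']
      have := GP_sign n j hjpos hjmono ⟨ν - 1, by omega⟩
      simpa using this
    have hAneg : ∀ ν : ℕ, 1 ≤ ν → ν ≤ n → A ν < 0 := by
      intro ν h1 h2'
      have hp := hpos ν h1 h2'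
      have : (0:ℝ) < (i ν : ℝ) := by exact_mod_cast hp
      have hx2 : (0:ℝ) < (i ν : ℝ) ^ 2 := by positivity
      simp only [hA]
      nlinarith [mul_pos hpi2 hx2]
    have hAmono : ∀ ν μ : ℕ, 1 ≤ ν → ν ≤ μ → μ ≤ n → A μ ≤ A ν := by
      intro ν μ h1 h12 h2'
      have hle : (i ν : ℝ) ≤ (i μ : ℝ) := by
        rcases eq_or_lt_of_le h12 with h | h
        · rw [h]
        · exact_mod_cast (hmono ν μ h1 h h2').le
      have hp : (0:ℝ) < (i ν : ℝ) := by exact_mod_cast hpos ν h1 (le_trans h12 h2')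
      have hsq : (i ν : ℝ) ^ 2 ≤ (i μ : ℝ) ^ 2 := by nlinarith
      have hmm := mul_le_mul_of_nonneg_left hsq hpi2.le
      simp only [hA]
      linarith
    have hroot2 : ∀ ν : ℕ, 2 ≤ ν → ν ≤ n →
        ∃ c, c ∈ Set.Ioo (A ν) (A (ν - 1)) ∧ (GP n j).eval c = 0 := by
      intro ν h2' hνn
      have s2 := hsign ν (by omega) hνn
      have s1 := hsign (ν - 1) (by omega) (by omega)
      have hνν : ν - 1 - 1 = ν - 2 := by omega
      rw [hνν] at s1
      have hpow : (-1 : ℝ) ^ (ν - 1) = -(-1 : ℝ) ^ (ν - 2) := by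
        have : ν - 1 = (ν - 2) + 1 := by omega
        rw [this, pow_succ]
        ring
      rw [hpow] at s2
      have hAlt : A ν < A (ν - 1) := by
        have hilt : i (ν - 1) < i ν := hmono (ν - 1) ν (by omega) (by omega) hνn
        have hilt' : (i (ν - 1) : ℝ) < (i ν : ℝ) := by exact_mod_cast hilt
        have hp : (0:ℝ) < (i (ν - 1) : ℝ) := by exact_mod_cast hpos (ν - 1) (by omega) (by omega)
        have hsq : (i (ν - 1) : ℝ) ^ 2 < (i ν : ℝ) ^ 2 := by nlinarith
        have hmm := mul_lt_mul_of_pos_left hsq hpi2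
        simp only [hA]
        linarith
      have hcont := (Polynomial.continuous (GP n j)).continuousOn
        (s := Set.Icc (A ν) (A (ν - 1)))
      rcases Nat.even_or_odd (ν - 2) with hpar | hpar
      · -- (-1)^(ν-2) = 1 : eval (A (ν-1)) < 0, eval (A ν) > 0
        rw [hpar.neg_one_pow] at s1 s2
        have hu : 0 < (GP n j).eval (A ν) := by nlinarith
        have hv : (GP n j).eval (A (ν - 1)) < 0 := by nlinarith
        have := intermediate_value_Ioo' hAlt.le hcont
          (Set.mem_Ioo.mpr ⟨hv, hu⟩)
        obtain ⟨c, hc, hc0⟩ := this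
        exact ⟨c, hc, hc0⟩
      · rw [hpar.neg_one_pow] at s1 s2
        have hu : (GP n j).eval (A ν) < 0 := by nlinarith
        have hv : 0 < (GP n j).eval (A (ν - 1)) := by nlinarith
        have := intermediate_value_Ioo hAlt.le hcont
          (Set.mem_Ioo.mpr ⟨hu, hv⟩)
        obtain ⟨c, hc, hc0⟩ := this
        exact ⟨c, hc, hc0⟩
    have hzero : (GP n j).eval 0 < 0 := by
      rw [GP_eval_zero]
      have hprod : 0 < ∏ a : Fin n, (80 * Real.pi ^ 2 * j a ^ 2) :=
        Finset.prod_pos (fun a _ => by have := hjpos a; positivity)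
      have : (1 : ℝ) - (n : ℝ) < 0 := by
        have : (2 : ℝ) ≤ (n : ℝ) := by exact_mod_cast hn2
        linarith
      exact mul_neg_of_neg_of_pos this hprod
    have hroot1 : ∃ c, 0 < c ∧ (GP n j).eval c = 0 := by
      have htends := Polynomial.tendsto_atTop_of_leadingCoeff_nonneg (GP n j)
        (by rw [hGdeg]; exact_mod_cast (by omega : 0 < n)) (by rw [hGlead]; positivity)
      have hev := (htends.eventually_gt_atTop 0).and (Filter.eventually_gt_atTop (0:ℝ))
      obtain ⟨T, hT1, hT2⟩ := hev.exists
      have hcont := (Polynomial.continuous (GP n j)).continuousOn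
        (s := Set.Icc (0:ℝ) T)
      have := intermediate_value_Ioo hT2.le hcont (Set.mem_Ioo.mpr ⟨hzero, hT1⟩)
      obtain ⟨c, hc, hc0⟩ := this
      exact ⟨c, hc.1, hc0⟩
    set d : ℕ → ℝ := fun ν =>
      if ν = 1 then hroot1.choose
      else if h : 2 ≤ ν ∧ ν ≤ n then (hroot2 ν h.1 h.2).choose else 0 with hd
    have hd1 : d 1 = hroot1.choose := by simp [hd]
    have hd1pos : 0 < d 1 := by rw [hd1]; exact hroot1.choose_spec.1
    have hd1root : (GP n j).eval (d 1) = 0 := by rw [hd1]; exact hroot1.choose_spec.2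
    have hdν : ∀ ν : ℕ, 2 ≤ ν → ν ≤ n →
        d ν ∈ Set.Ioo (A ν) (A (ν - 1)) ∧ (GP n j).eval (d ν) = 0 := by
      intro ν h2' hνn
      have : d ν = (hroot2 ν h2' hνn).choose := by
        simp only [hd, if_neg (by omega : ¬ ν = 1), dif_pos (⟨h2', hνn⟩ : 2 ≤ ν ∧ ν ≤ n)]
      rw [this]
      exact (hroot2 ν h2' hνn).choose_spec
    have hdmono : ∀ ν μ : ℕ, 1 ≤ ν → ν < μ → μ ≤ n → d μ < d ν := by
      intro ν μ h1 hνμ hμn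
      have hμ2 : 2 ≤ μ := by omega
      have hdμ := hdν μ hμ2 hμn
      have hub : d μ < A (μ - 1) := hdμ.1.2
      rcases eq_or_lt_of_le h1 with hν1 | hν2
      · -- ν = 1
        rw [← hν1]
        have : A (μ - 1) < 0 := hAneg (μ - 1) (by omega) (by omega)
        linarith [hd1pos]
      · have hν2' : 2 ≤ ν := hν2
        have hdν' := hdν ν hν2' (by omega)
        have hlb : A ν < d ν := hdν'.1.1
        have hch : A (μ - 1) ≤ A ν := hAmono ν (μ - 1) (by omega) (by omega) (by omega)
        linarith
    have hroots : ∀ ν : ℕ, 1 ≤ ν → ν ≤ n → (GP n j).eval (d ν) = 0 := by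
      intro ν h1 h2'
      rcases eq_or_lt_of_le h1 with hν1 | hν2
      · rw [← hν1]; exact hd1root
      · exact (hdν ν hν2 h2').2
    -- set equality
    have hseteq : {c : ℝ | (Matrix.of fun a b : Fin n =>
        if a = b then 60 * c
        else -80 * Real.pi ^ 2 * (i (a.1 + 1) : ℝ) * (i (b.1 + 1) : ℝ)).det = 0}
        = d '' Set.Icc 1 n := by
      ext c
      simp only [Set.mem_setOf_eq, hdetG c]
      constructor
      · intro hc
        -- c is a root; the n values d ν are distinct roots
        set F : Finset ℝ := (Finset.Icc 1 n).image d with hF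
        have hinj : Set.InjOn d (Finset.Icc 1 n) := by
          intro x hx y hy hxy
          simp only [Finset.coe_Icc, Set.mem_Icc] at hx hy
          by_contra hne
          rcases Nat.lt_or_ge x y with h | h
          · exact absurd hxy (ne_of_gt (hdmono x y hx.1 h hy.2))
          · have h' : y < x := by omega
            exact absurd hxy.symm (ne_of_gt (hdmono y x hy.1 h' hx.2))
        have hcard : F.card = n := by
          rw [hF, Finset.card_image_of_injOn hinj, Nat.card_Icc]
          omega
        have hFsub : F ⊆ (GP n j).roots.toFinset := by
          intro x hx
          rw [hF, Finset.mem_image] at hx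
          obtain ⟨ν, hν, hdx⟩ := hx
          rw [Finset.mem_Icc] at hν
          rw [Multiset.mem_toFinset, Polynomial.mem_roots']
          exact ⟨hGne, by rw [← hdx]; exact hroots ν hν.1 hν.2⟩
        have hcard_le : ((GP n j).roots.toFinset).card ≤ n := by
          refine le_trans (Multiset.toFinset_card_le _) ?_
          calc Multiset.card (GP n j).roots ≤ (GP n j).natDegree := (GP n j).card_roots'
            _ = n := hGnat
        by_contra hcF
        have hcnotF : c ∉ F := by
          intro hcF'
          apply hcF
          rw [hF, Finset.mem_image] at hcF'
          obtain ⟨ν, hν, hdx⟩ := hcF'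
          rw [Finset.mem_Icc] at hν
          exact ⟨ν, Set.mem_Icc.mpr hν, hdx⟩
        have hcroot : c ∈ (GP n j).roots.toFinset := by
          rw [Multiset.mem_toFinset, Polynomial.mem_roots']
          exact ⟨hGne, hc⟩
        have hsub2 : insert c F ⊆ (GP n j).roots.toFinset := by
          intro x hx
          rcases Finset.mem_insert.mp hx with h | h
          · rw [h]; exact hcroot
          · exact hFsub h
        have : n + 1 ≤ n := by
          calc n + 1 = (insert c F).card := by rw [Finset.card_insert_of_notMem hcnotF, hcard]
            _ ≤ ((GP n j).roots.toFinset).card := Finset.card_le_card hsub2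
            _ ≤ n := hcard_le
        omega
      · rintro ⟨ν, hν, hdc⟩
        rw [Set.mem_Icc] at hν
        rw [← hdc]
        exact hroots ν hν.1 hν.2
    refine ⟨d, hdmono, hseteq, fun h => by omega, fun _ => ⟨hd1pos, ?_, ?_⟩⟩
    · rintro ⟨ν, hν, hdc⟩
      rw [Set.mem_Icc] at hν
      rcases eq_or_lt_of_le hν.1 with hν1 | hν2
      · rw [← hν1] at hdc
        exact absurd hdc (ne_of_gt hd1pos)
      · have hdν' := hdν ν hν2 hν.2
        have : d ν < 0 := lt_trans hdν'.1.2 (hAneg (ν - 1) (by omega) (by omega))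
        rw [hdc] at this
        exact absurd this (lt_irrefl 0)
    · intro ν h2' hνn
      have hdν' := hdν ν h2' hνn
      exact ⟨hdν'.1.1, hdν'.1.2⟩
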